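/- Let β = 1/2, ν > 0, α > 0, γ ≥ 0, t > 0, and ξ ∈ ℝ^d with |ξ| > 1. Then ∫_0^t (E_{1/2}(-ν u^{1/2} |ξ|^α (1+|ξ|^2)^(γ/2)))^2 du ≤ 2 ν^{-1} Γ(3/2) t^{1/2} 2^((α+γ)/2) (1/(1+|ξ|^2))^((α+γ)/2). -/

import Mathlib

open MeasureTheory Real

noncomputable def mittagLeffler (β x : ℝ) : ℝ :=
  ∑' j : ℕ, x ^ j / Real.Gamma (1 + β * j)

open Set

lemma int_pow_gauss (j : ℕ) :
    ∫ s in Ioi (0:ℝ), s ^ j * Real.exp (-s^2) = (1/2) * Real.Gamma ((j+1)/2) := by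
  have h := integral_rpow_mul_exp_neg_rpow (p := 2) (q := (j:ℝ)) two_pos
    (by exact lt_of_lt_of_le neg_one_lt_zero (Nat.cast_nonneg j))
  rw [← h]
  refine setIntegral_congr_fun measurableSet_Ioi (fun s _ => ?_)
  rw [show ((2:ℝ)) = ((2:ℕ):ℝ) by norm_num, Real.rpow_natCast, Real.rpow_natCast]

lemma gamma_add_half_le (k : ℕ) : Real.Gamma (k + 1/2) ≤ 2 * k.factorial := by
  induction k with
  | zero =>
      simp only [Nat.cast_zero, zero_add, Real.Gamma_one_half_eq, Nat.factorial_zero,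
        Nat.cast_one, mul_one]
      rw [show (2:ℝ) = Real.sqrt 4 by
        rw [show (4:ℝ) = 2^2 by norm_num, Real.sqrt_sq (by norm_num)]]
      exact Real.sqrt_le_sqrt (by linarith [Real.pi_le_four])
  | succ k ih =>
      have hne : ((k:ℝ) + 1/2) ≠ 0 := by positivity
      have : Real.Gamma ((k:ℝ) + 1/2 + 1) = ((k:ℝ)+1/2) * Real.Gamma ((k:ℝ)+1/2) :=
        Real.Gamma_add_one hne
      have hpos : (0:ℝ) ≤ Real.Gamma ((k:ℝ)+1/2) := Real.Gamma_nonneg_of_nonneg (by positivity)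
      have h2 : ((k:ℝ)+1/2) * Real.Gamma ((k:ℝ)+1/2) ≤ ((k:ℝ)+1) * (2 * k.factorial) := by
        apply mul_le_mul (by linarith) ih hpos (by positivity)
      calc Real.Gamma (↑(k+1) + 1/2) = Real.Gamma ((k:ℝ) + 1/2 + 1) := by
            push_cast; ring_nf
        _ ≤ ((k:ℝ)+1) * (2 * k.factorial) := by rw [this]; exact h2
        _ = 2 * (k+1).factorial := by
            rw [Nat.factorial_succ]; push_cast; ring

lemma summable_c {y : ℝ} (hy : 0 ≤ y) :
    Summable (fun j : ℕ => y ^ j / j.factorial * ((1/2) * Real.Gamma ((j+1)/2))) := by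
  apply Summable.even_add_odd
  · -- even terms
    refine Summable.of_nonneg_of_le (fun k => by positivity) (fun k => ?_)
      (Real.summable_pow_div_factorial (y^2))
    · push_cast
      have h1 : Real.Gamma ((2*(k:ℝ)+1)/2) ≤ 2 * k.factorial := by
        have := gamma_add_half_le k
        rw [show (2*(k:ℝ)+1)/2 = (k:ℝ) + 1/2 by ring]
        exact this
      have h2 : ((k.factorial : ℝ)) * k.factorial ≤ (2*k).factorial := by
        exact_mod_cast Nat.le_of_dvd (Nat.factorial_pos _)
          (by simpa [two_mul] using Nat.factorial_mul_factorial_dvd_factorial_add k k)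
      have hfk : (0:ℝ) < k.factorial := by exact_mod_cast Nat.factorial_pos k
      have hf2k : (0:ℝ) < (2*k).factorial := by exact_mod_cast Nat.factorial_pos (2*k)
      calc y ^ (2*k) / (2*k).factorial * ((1/2) * Real.Gamma ((2*(k:ℝ)+1)/2))
          ≤ y ^ (2*k) / (2*k).factorial * ((1/2) * (2*k.factorial)) := by
            apply mul_le_mul_of_nonneg_left (by linarith) (by positivity)
        _ = y ^ (2*k) * k.factorial / (2*k).factorial := by ring
        _ ≤ y ^ (2*k) * k.factorial / (k.factorial * k.factorial) := by
            apply div_le_div_of_nonneg_left (by positivity) (by positivity) h2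
        _ = (y^2) ^ k / k.factorial := by
            rw [pow_mul]; field_simp
  · -- odd terms
    refine Summable.of_nonneg_of_le (fun k => by positivity) (fun k => ?_)
      ((Real.summable_pow_div_factorial (y^2)).mul_left y)
    · push_cast
      have h1 : Real.Gamma ((2*(k:ℝ)+1+1)/2) = k.factorial := by
        rw [show (2*(k:ℝ)+1+1)/2 = (k:ℝ) + 1 by ring, Real.Gamma_nat_eq_factorial]
      have h2 : ((k.factorial : ℝ)) * k.factorial ≤ (2*k+1).factorial := by
        have := Nat.factorial_mul_factorial_dvd_factorial_add k k
        have hle : (k.factorial * k.factorial : ℕ) ≤ (2*k).factorial := by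
          exact Nat.le_of_dvd (Nat.factorial_pos _) (by simpa [two_mul] using this)
        have : ((2*k).factorial : ℕ) ≤ (2*k+1).factorial :=
          Nat.factorial_le (by omega)
        exact_mod_cast le_trans hle this
      have hfk : (0:ℝ) < k.factorial := by exact_mod_cast Nat.factorial_pos k
      have hf2k : (0:ℝ) < (2*k+1).factorial := by exact_mod_cast Nat.factorial_pos (2*k+1)
      calc y ^ (2*k+1) / (2*k+1).factorial * ((1/2) * Real.Gamma ((2*(k:ℝ)+1+1)/2))
          = y ^ (2*k+1) * k.factorial / (2 * (2*k+1).factorial) := by rw [h1]; ring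
        _ ≤ y ^ (2*k+1) * k.factorial / (2 * (k.factorial * k.factorial)) := by
            apply div_le_div_of_nonneg_left (by positivity) (by positivity) (by linarith)
        _ = y * ((y^2) ^ k / k.factorial) / 2 := by
            rw [pow_succ, pow_mul]; field_simp
        _ ≤ y * ((y^2) ^ k / k.factorial) := by
            have : (0:ℝ) ≤ y * ((y^2) ^ k / k.factorial) := by positivity
            linarith

lemma hexp_tsum (z : ℝ) : ∑' j : ℕ, z ^ j / (j.factorial : ℝ) = Real.exp z := by
  rw [Real.exp_eq_exp_ℝ, NormedSpace.exp_eq_tsum_div]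

lemma ml_repr {x : ℝ} (hx : 0 ≤ x) :
    mittagLeffler (1/2) (-x)
      = (2 / Real.sqrt π) * ∫ s in Ioi (0:ℝ), Real.exp (-(s^2 + 2*s*x)) := by
  classical
  set F : ℕ → ℝ → ℝ := fun j s => ((-(2*x))^j / j.factorial) * (s^j * Real.exp (-s^2)) with hF
  have base : ∀ j : ℕ, IntegrableOn (fun s : ℝ => s^j * Real.exp (-s^2)) (Ioi 0) := by
    intro j
    have := integrableOn_rpow_mul_exp_neg_rpow (p := 2) (s := (j:ℝ))
      (by exact lt_of_lt_of_le neg_one_lt_zero (Nat.cast_nonneg j)) two_pos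
    refine this.congr_fun (fun s _ => ?_) measurableSet_Ioi
    simp only [Real.rpow_natCast, Real.rpow_two]
  have hIntF : ∀ j : ℕ, IntegrableOn (F j) (Ioi 0) := fun j => (base j).const_mul _
  have hGpos : ∀ j : ℕ, (0:ℝ) < Real.Gamma (1 + (1/2) * j) := fun j =>
    Real.Gamma_pos_of_pos (by positivity)
  have hdup : ∀ j : ℕ, Real.Gamma (((j:ℝ)+1)/2) * Real.Gamma (1 + (1/2) * j)
      = (j.factorial : ℝ) * ((2:ℝ)^j)⁻¹ * Real.sqrt π := by
    intro j
    have h := Real.Gamma_mul_Gamma_add_half (((j:ℝ)+1)/2)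
    rw [show ((j:ℝ)+1)/2 + 1/2 = 1 + (1/2) * j by ring,
      show 2 * (((j:ℝ)+1)/2) = (j:ℝ) + 1 by ring,
      Real.Gamma_nat_eq_factorial,
      show (1 - ((j:ℝ)+1)) = -(j:ℝ) by ring,
      Real.rpow_neg (by norm_num : (0:ℝ) ≤ 2), Real.rpow_natCast] at h
    exact h
  have hval : ∀ j : ℕ, ∫ s in Ioi (0:ℝ), F j s
      = (Real.sqrt π / 2) * ((-x)^j / Real.Gamma (1 + (1/2) * j)) := by
    intro j
    rw [hF]
    simp only []
    rw [MeasureTheory.integral_const_mul, int_pow_gauss j]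
    have hG := hdup j
    have hne : Real.Gamma (1 + (1/2) * (j:ℝ)) ≠ 0 := (hGpos j).ne'
    have h2j : ((2:ℝ)^j) ≠ 0 := by positivity
    have hfac : (j.factorial : ℝ) ≠ 0 := by exact_mod_cast (Nat.factorial_pos j).ne'
    have hxj : (-(2*x))^j = (-x)^j * 2^j := by
      rw [show (-(2*x)) = (-x) * 2 by ring, mul_pow]
    rw [hxj]
    set G1 := Real.Gamma (((j:ℝ)+1)/2) with hG1d
    set G2 := Real.Gamma (1 + (1/2) * (j:ℝ)) with hG2d
    have hGe : G1 = (j.factorial : ℝ) * ((2:ℝ)^j)⁻¹ * Real.sqrt π / G2 := by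
      rw [eq_div_iff hne]; exact hG
    rw [hGe]
    field_simp
  have hnorm : ∀ j : ℕ, ∫ s in Ioi (0:ℝ), ‖F j s‖
      = (2*x)^j / j.factorial * ((1/2) * Real.Gamma (((j:ℝ)+1)/2)) := by
    intro j
    have hcong : ∀ s ∈ Ioi (0:ℝ), ‖F j s‖ = ((2*x)^j / j.factorial) * (s^j * Real.exp (-s^2)) := by
      intro s hs
      rw [hF]
      simp only []
      have habs : |(-(2*x))^j / (j.factorial:ℝ)| = (2*x)^j / j.factorial := by
        rw [abs_div, abs_pow, abs_neg, abs_of_nonneg (by linarith : (0:ℝ) ≤ 2*x),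
          abs_of_nonneg (by exact_mod_cast Nat.zero_le _ : (0:ℝ) ≤ (j.factorial:ℝ))]
      rw [Real.norm_eq_abs, abs_mul, habs,
        abs_of_nonneg (mul_nonneg (pow_nonneg (le_of_lt hs) j) (Real.exp_nonneg _))]
    rw [setIntegral_congr_fun measurableSet_Ioi hcong, MeasureTheory.integral_const_mul,
      int_pow_gauss j]
  have hsum : Summable (fun j : ℕ => ∫ s in Ioi (0:ℝ), ‖F j s‖) := by
    refine (summable_c (y := 2*x) (by linarith)).congr (fun j => ?_)
    exact (hnorm j).symm
  have key : ∑' j : ℕ, ∫ s in Ioi (0:ℝ), F j s = ∫ s in Ioi (0:ℝ), ∑' j : ℕ, F j s :=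
    MeasureTheory.integral_tsum_of_summable_integral_norm hIntF hsum
  have hpt : ∀ s ∈ Ioi (0:ℝ), ∑' j : ℕ, F j s = Real.exp (-(s^2 + 2*s*x)) := by
    intro s _
    have h1 : ∀ j : ℕ, F j s = ((-(2*x)*s)^j / j.factorial) * Real.exp (-s^2) := by
      intro j; rw [hF]; simp only []; rw [mul_pow]; ring
    rw [tsum_congr h1, tsum_mul_right, hexp_tsum (-(2*x)*s), ← Real.exp_add]
    congr 1
    ring
  have hint_eq : ∫ s in Ioi (0:ℝ), ∑' j : ℕ, F j s
      = ∫ s in Ioi (0:ℝ), Real.exp (-(s^2+2*s*x)) :=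
    setIntegral_congr_fun measurableSet_Ioi hpt
  have hone : (2/Real.sqrt π) * (Real.sqrt π / 2) = 1 := by
    have : Real.sqrt π ≠ 0 := by positivity
    field_simp
  calc mittagLeffler (1/2) (-x) = ∑' j : ℕ, (-x)^j / Real.Gamma (1 + (1/2) * j) := rfl
    _ = ∑' j : ℕ, (2/Real.sqrt π) * ∫ s in Ioi (0:ℝ), F j s := by
        refine tsum_congr (fun j => ?_)
        rw [hval j, ← mul_assoc, hone, one_mul]
    _ = (2/Real.sqrt π) * ∑' j : ℕ, ∫ s in Ioi (0:ℝ), F j s := tsum_mul_left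
    _ = _ := by rw [key, hint_eq]

lemma gauss_shift_integrable {x : ℝ} (hx : 0 ≤ x) :
    IntegrableOn (fun s : ℝ => Real.exp (-(s^2 + 2*s*x))) (Ioi 0) := by
  refine Integrable.mono' ((integrable_exp_neg_mul_sq one_pos).integrableOn)
    (Continuous.aestronglyMeasurable (by continuity)) ?_
  filter_upwards [ae_restrict_mem measurableSet_Ioi] with s hs
  rw [Real.norm_eq_abs, abs_of_nonneg (Real.exp_nonneg _)]
  apply Real.exp_le_exp.mpr
  have : 0 < s := hs
  nlinarith

lemma gauss_halfline : ∫ s in Ioi (0:ℝ), Real.exp (-s^2) = Real.sqrt π / 2 := by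
  have := integral_gaussian_Ioi 1
  simpa using this

lemma ml_nonneg {x : ℝ} (hx : 0 ≤ x) : 0 ≤ mittagLeffler (1/2) (-x) := by
  rw [ml_repr hx]
  apply mul_nonneg (by positivity)
  exact setIntegral_nonneg measurableSet_Ioi (fun s _ => Real.exp_nonneg _)

lemma ml_le_one {x : ℝ} (hx : 0 ≤ x) : mittagLeffler (1/2) (-x) ≤ 1 := by
  rw [ml_repr hx]
  have hmono : ∫ s in Ioi (0:ℝ), Real.exp (-(s^2 + 2*s*x)) ≤ ∫ s in Ioi (0:ℝ), Real.exp (-s^2) := by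
    refine setIntegral_mono_on (gauss_shift_integrable hx)
      ((integrable_exp_neg_mul_sq one_pos).integrableOn.congr_fun (fun s _ => by norm_num)
        measurableSet_Ioi) measurableSet_Ioi (fun s hs => ?_)
    apply Real.exp_le_exp.mpr
    have : 0 < s := hs
    nlinarith
  calc 2 / Real.sqrt π * ∫ s in Ioi (0:ℝ), Real.exp (-(s^2 + 2*s*x))
      ≤ 2 / Real.sqrt π * (Real.sqrt π / 2) := by
        apply mul_le_mul_of_nonneg_left _ (by positivity)
        rw [← gauss_halfline]; exact hmono
    _ = 1 := by
        have : Real.sqrt π ≠ 0 := by positivity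
        field_simp

lemma ml_le_inv {x : ℝ} (hx : 0 < x) :
    mittagLeffler (1/2) (-x) ≤ 1 / (Real.sqrt π * x) := by
  rw [ml_repr (le_of_lt hx)]
  have hexpint : ∫ s in Ioi (0:ℝ), Real.exp (-(2*x*s)) = 1/(2*x) := by
    have h := integral_rpow_mul_exp_neg_mul_Ioi (a := 1) (r := 2*x) one_pos (by linarith)
    simpa using h
  have hmono : ∫ s in Ioi (0:ℝ), Real.exp (-(s^2 + 2*s*x))
      ≤ ∫ s in Ioi (0:ℝ), Real.exp (-(2*x*s)) := by
    refine setIntegral_mono_on (gauss_shift_integrable (le_of_lt hx))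
      ((exp_neg_integrableOn_Ioi 0 (by linarith : (0:ℝ) < 2*x)).congr_fun
        (fun s _ => by ring_nf) measurableSet_Ioi) measurableSet_Ioi (fun s hs => ?_)
    apply Real.exp_le_exp.mpr
    have h0 : 0 < s := hs
    nlinarith
  calc 2 / Real.sqrt π * ∫ s in Ioi (0:ℝ), Real.exp (-(s^2 + 2*s*x))
      ≤ 2 / Real.sqrt π * (1/(2*x)) := by
        apply mul_le_mul_of_nonneg_left _ (by positivity)
        rw [← hexpint]; exact hmono
    _ = 1 / (Real.sqrt π * x) := by
        have : Real.sqrt π ≠ 0 := by positivity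
        field_simp

lemma ml_anti {x₁ x₂ : ℝ} (h1 : 0 ≤ x₁) (h12 : x₁ ≤ x₂) :
    mittagLeffler (1/2) (-x₂) ≤ mittagLeffler (1/2) (-x₁) := by
  rw [ml_repr h1, ml_repr (le_trans h1 h12)]
  apply mul_le_mul_of_nonneg_left _ (by positivity)
  refine setIntegral_mono_on (gauss_shift_integrable (le_trans h1 h12))
    (gauss_shift_integrable h1) measurableSet_Ioi (fun s hs => ?_)
  apply Real.exp_le_exp.mpr
  have h0 : 0 < s := hs
  nlinarith

lemma ml_sq_le {x : ℝ} (hx : 0 < x) :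
    (mittagLeffler (1/2) (-x))^2 ≤ (Real.sqrt π / 2) / x := by
  have h0 := ml_nonneg (le_of_lt hx)
  have hs : (0:ℝ) < Real.sqrt π := Real.sqrt_pos.mpr Real.pi_pos
  rcases le_or_gt x (Real.sqrt π / 2) with hc | hc
  · have h1 := ml_le_one (le_of_lt hx)
    calc (mittagLeffler (1/2) (-x))^2 ≤ 1^2 := by
          apply pow_le_pow_left₀ h0 h1
      _ = 1 := one_pow 2
      _ ≤ (Real.sqrt π / 2) / x := by
          rw [le_div_iff₀ hx]; linarith
  · have h2 := ml_le_inv hx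
    calc (mittagLeffler (1/2) (-x))^2 ≤ (1 / (Real.sqrt π * x))^2 :=
          pow_le_pow_left₀ h0 h2 2
      _ ≤ (Real.sqrt π / 2) / x := by
          rw [div_pow, one_pow, div_le_div_iff₀ (by positivity) hx]
          have hpi : Real.sqrt π ^ 2 = π := Real.sq_sqrt (le_of_lt Real.pi_pos)
          have hpi3 : (3:ℝ) < π := Real.pi_gt_three
          nlinarith [sq_nonneg (Real.sqrt π * x), sq_nonneg x]

theorem Nt_bound_critical_beta (d : ℕ) (ν α γ t : ℝ) (ξ : EuclideanSpace ℝ (Fin d))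
    (hν : 0 < ν) (hα : 0 < α) (hγ : 0 ≤ γ) (ht : 0 < t) (hξ : 1 < ‖ξ‖) :
    ∫ u in (0:ℝ)..t,
        (mittagLeffler (1/2) (-(ν * u ^ ((1:ℝ)/2) * ‖ξ‖ ^ α * (1 + ‖ξ‖ ^ 2) ^ (γ / 2)))) ^ 2
      ≤ 2 * ν⁻¹ * Real.Gamma (3/2) * t ^ ((1:ℝ)/2) * 2 ^ ((α + γ) / 2)
          * (1 / (1 + ‖ξ‖ ^ 2)) ^ ((α + γ) / 2) := by
  set N := ‖ξ‖ with hNdef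
  have hN : (0:ℝ) < N := lt_trans one_pos hξ
  set A := N ^ α * (1 + N ^ 2) ^ (γ / 2) with hAdef
  have hA : 0 < A := by positivity
  set c := ν * A with hcdef
  have hc : 0 < c := mul_pos hν hA
  set g : ℝ → ℝ := fun u => mittagLeffler (1/2) (-(c * Real.sqrt u)) with hgdef
  have hfg : ∀ u : ℝ,
      mittagLeffler (1/2) (-(ν * u ^ ((1:ℝ)/2) * N ^ α * (1 + N ^ 2) ^ (γ / 2))) = g u := by
    intro u
    rw [hgdef]
    congr 1
    rw [Real.sqrt_eq_rpow]
    ring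
  have hg_nonneg : ∀ u : ℝ, 0 ≤ g u := fun u =>
    ml_nonneg (mul_nonneg hc.le (Real.sqrt_nonneg u))
  have hg_le_one : ∀ u : ℝ, g u ≤ 1 := fun u =>
    ml_le_one (mul_nonneg hc.le (Real.sqrt_nonneg u))
  have hg_anti : Antitone g := by
    intro u₁ u₂ h
    exact ml_anti (mul_nonneg hc.le (Real.sqrt_nonneg u₁))
      (mul_le_mul_of_nonneg_left (Real.sqrt_le_sqrt h) hc.le)
  have hInt : IntervalIntegrable (fun u => g u ^ 2) volume 0 t := by
    rw [intervalIntegrable_iff_integrableOn_Ioc_of_le ht.le]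
    refine Integrable.mono' (g := fun _ => (1:ℝ)) ?_
      ((hg_anti.measurable.pow_const 2).aestronglyMeasurable) ?_
    · exact integrableOn_const measure_Ioc_lt_top.ne
    · refine Filter.Eventually.of_forall (fun u => ?_)
      rw [Real.norm_eq_abs, abs_of_nonneg (by positivity)]
      calc g u ^ 2 ≤ 1 ^ 2 := pow_le_pow_left₀ (hg_nonneg u) (hg_le_one u) 2
        _ = 1 := one_pow 2
  have hIntR : IntervalIntegrable (fun u : ℝ => (Real.sqrt π / 2) / c * u ^ (-(1/2) : ℝ))
      volume 0 t :=
    (intervalIntegral.intervalIntegrable_rpow' (by norm_num)).const_mul _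
  have hcomp : ∫ u in (0:ℝ)..t, g u ^ 2
      ≤ ∫ u in (0:ℝ)..t, (Real.sqrt π / 2) / c * u ^ (-(1/2) : ℝ) := by
    apply intervalIntegral.integral_mono_ae_restrict ht.le hInt hIntR
    have h0' : ∀ᵐ (u : ℝ), u ≠ 0 := by
      rw [ae_iff]
      have hset : {u : ℝ | ¬u ≠ 0} = {0} := by ext u; simp
      rw [hset]
      exact measure_singleton 0
    filter_upwards [ae_restrict_mem measurableSet_Icc, ae_restrict_of_ae h0'] with u hu hne
    have hu0 : 0 < u := lt_of_le_of_ne hu.1 (Ne.symm hne)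
    have harg : 0 < c * Real.sqrt u := mul_pos hc (Real.sqrt_pos.mpr hu0)
    calc g u ^ 2 ≤ (Real.sqrt π / 2) / (c * Real.sqrt u) := ml_sq_le harg
      _ = (Real.sqrt π / 2) / c * u ^ (-(1/2) : ℝ) := by
          rw [Real.rpow_neg hu0.le, ← Real.sqrt_eq_rpow]
          have hsu : Real.sqrt u ≠ 0 := (Real.sqrt_pos.mpr hu0).ne'
          field_simp
  have hval : ∫ u in (0:ℝ)..t, (Real.sqrt π / 2) / c * u ^ (-(1/2) : ℝ)
      = (Real.sqrt π / 2) / c * (2 * t ^ ((1:ℝ)/2)) := by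
    rw [intervalIntegral.integral_const_mul, integral_rpow (Or.inl (by norm_num))]
    rw [show (-(1/2 : ℝ) + 1) = (1:ℝ)/2 by norm_num,
      Real.zero_rpow (by norm_num : (1:ℝ)/2 ≠ 0)]
    ring
  set T := t ^ ((1:ℝ)/2) with hTdef
  have hT : 0 < T := Real.rpow_pos_of_pos ht _
  set w := (α + γ) / 2 with hwdef
  have hbase : (0:ℝ) < (1 + N ^ 2) / 2 := by positivity
  have hkey : ((1 + N ^ 2) / 2) ^ w ≤ A := by
    have hsplit : ((1 + N ^ 2) / 2) ^ w
        = ((1 + N ^ 2) / 2) ^ (α/2) * ((1 + N ^ 2) / 2) ^ (γ/2) := by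
      rw [← Real.rpow_add hbase]
      congr 1
      rw [hwdef]; ring
    have h1 : ((1 + N ^ 2) / 2) ^ (α/2) ≤ N ^ α := by
      have hle : (1 + N ^ 2) / 2 ≤ N ^ 2 := by nlinarith
      calc ((1 + N ^ 2) / 2) ^ (α/2) ≤ (N ^ 2) ^ (α/2) :=
            Real.rpow_le_rpow hbase.le hle (by positivity)
        _ = N ^ α := by
            rw [show (N ^ 2 : ℝ) = N ^ (2:ℝ) from (Real.rpow_two N).symm,
              ← Real.rpow_mul hN.le, show (2:ℝ) * (α/2) = α by ring]
    have h2 : ((1 + N ^ 2) / 2) ^ (γ/2) ≤ (1 + N ^ 2) ^ (γ/2) :=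
      Real.rpow_le_rpow hbase.le (by nlinarith) (by positivity)
    rw [hsplit, hAdef]
    exact mul_le_mul h1 h2 (by positivity) (by positivity)
  have h6 : 1 / A ≤ (2 / (1 + N ^ 2)) ^ w := by
    rw [show (2 / (1 + N ^ 2) : ℝ) = ((1 + N ^ 2) / 2)⁻¹ from (inv_div _ _).symm,
      Real.inv_rpow hbase.le, one_div]
    exact inv_anti₀ (Real.rpow_pos_of_pos hbase w) hkey
  have h8 : 2 * ν⁻¹ * (Real.sqrt π / 2) * T * 2 ^ w * (1 / (1 + N ^ 2)) ^ w
      = ν⁻¹ * Real.sqrt π * T * (2 / (1 + N ^ 2)) ^ w := by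
    rw [Real.div_rpow (by norm_num : (0:ℝ) ≤ 2) (by positivity),
      one_div ((1:ℝ) + N ^ 2), Real.inv_rpow (by positivity)]
    have hpow : ((1:ℝ) + N ^ 2) ^ w ≠ 0 := (Real.rpow_pos_of_pos (by positivity) w).ne'
    field_simp
  have hG32 : Real.Gamma (3/2) = Real.sqrt π / 2 := by
    rw [show (3/2 : ℝ) = 1/2 + 1 by norm_num, Real.Gamma_add_one (by norm_num),
      Real.Gamma_one_half_eq]
    ring
  calc ∫ u in (0:ℝ)..t,
        (mittagLeffler (1/2) (-(ν * u ^ ((1:ℝ)/2) * N ^ α * (1 + N ^ 2) ^ (γ / 2)))) ^ 2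
      = ∫ u in (0:ℝ)..t, g u ^ 2 := by
        simp only [hfg]
    _ ≤ ∫ u in (0:ℝ)..t, (Real.sqrt π / 2) / c * u ^ (-(1/2) : ℝ) := hcomp
    _ = (Real.sqrt π / 2) / c * (2 * T) := hval
    _ = ν⁻¹ * Real.sqrt π * T * (1 / A) := by
        rw [hcdef]
        field_simp
    _ ≤ ν⁻¹ * Real.sqrt π * T * ((2 / (1 + N ^ 2)) ^ w) :=
        mul_le_mul_of_nonneg_left h6 (by positivity)
    _ = 2 * ν⁻¹ * Real.Gamma (3/2) * T * 2 ^ w * (1 / (1 + N ^ 2)) ^ w := by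
        rw [hG32, h8]
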